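/- For a faulty measurement with internal distribution P on P̄_n × F_2^m and any a ∈ F_2^m, the expected value of S(a) computed from the faulty outcome distribution satisfies Ẽ(a|ρ) = E(χ_a; P) · E(a|ρ), where E(χ_a; P) = Σ_{e,u} (-1)^{a·u} P(e,u), Ẽ(a|ρ) = Σ_x (-1)^{a·x} p̃(x|ρ), and E(a|ρ) = tr(S(a)ρ). -/

import Mathlib

open Finset Matrix

def dotp {m : ℕ} (a x : Fin m → ZMod 2) : ZMod 2 := ∑ i, a i * x i

/-- Syndrome projection `π_x = Π_i (Id + (-1)^{x_i} S_i)/2`. -/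
noncomputable def proj {d : Type*} [Fintype d] [DecidableEq d] {m : ℕ}
    (S : Fin m → Matrix d d ℂ) (x : Fin m → ZMod 2) : Matrix d d ℂ :=
  (List.ofFn fun i => (2 : ℂ)⁻¹ • ((1 : Matrix d d ℂ) + ((-1 : ℂ) ^ (x i).val) • S i)).prod

/-- Stabilizer element `S(a) = Π_i S_i^{a_i}`. -/
noncomputable def Spow {d : Type*} [Fintype d] [DecidableEq d] {m : ℕ}
    (S : Fin m → Matrix d d ℂ) (a : Fin m → ZMod 2) : Matrix d d ℂ :=
  (List.ofFn fun i => S i ^ (a i).val).prod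

lemma val1 : ((1 : ZMod 2)).val = 1 := rfl
lemma val0 : ((0 : ZMod 2)).val = 0 := rfl
lemma val11 : ((1 + 1 : ZMod 2)).val = 0 := rfl

lemma sign_add (u v : ZMod 2) : ((-1:ℂ)) ^ (u+v).val = (-1)^u.val * (-1)^v.val := by
  rcases (by decide : ∀ w : ZMod 2, w = 0 ∨ w = 1) u with rfl | rfl <;> rcases (by decide : ∀ w : ZMod 2, w = 0 ∨ w = 1) v with rfl | rfl <;> simp [val1, val11]

lemma base {d : Type*} [Fintype d] [DecidableEq d] (S : Matrix d d ℂ) (b : ZMod 2) :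
    ∑ x0 : ZMod 2, ((-1:ℂ) ^ (b * x0).val) • ((2 : ℂ)⁻¹ • ((1 : Matrix d d ℂ) + ((-1 : ℂ) ^ (x0).val) • S)) = S ^ b.val := by
  have huniv : (Finset.univ : Finset (ZMod 2)) = {0, 1} := by decide
  rw [huniv, Finset.sum_insert (by decide), Finset.sum_singleton]
  rcases (by decide : ∀ w : ZMod 2, w = 0 ∨ w = 1) b with rfl | rfl <;> simp [val1, val0] <;> module

lemma key {d : Type*} [Fintype d] [DecidableEq d] :
    ∀ {m : ℕ} (S : Fin m → Matrix d d ℂ) (a : Fin m → ZMod 2),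
    ∑ x : Fin m → ZMod 2, ((-1:ℂ) ^ (dotp a x).val) • proj S x = Spow S a
  | 0, S, a => by
    simp [proj, Spow, dotp, val0]
  | (m+1), S, a => by
    have hre : ∑ x : Fin (m+1) → ZMod 2, ((-1:ℂ) ^ (dotp a x).val) • proj S x
        = ∑ p : ZMod 2 × (Fin m → ZMod 2),
            ((-1:ℂ) ^ (dotp a (Fin.cons p.1 p.2)).val) • proj S (Fin.cons p.1 p.2) := by
      rw [← Equiv.sum_comp (Fin.consEquiv (fun _ : Fin (m+1) => ZMod 2))
        (fun x => ((-1:ℂ) ^ (dotp a x).val) • proj S x)]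
      rfl
    rw [hre, Fintype.sum_prod_type]
    have hdot : ∀ (x0 : ZMod 2) (xs : Fin m → ZMod 2),
        dotp a (Fin.cons x0 xs) = a 0 * x0 + dotp (fun i => a i.succ) xs := by
      intro x0 xs
      simp [dotp, Fin.sum_univ_succ]
    have hproj : ∀ (x0 : ZMod 2) (xs : Fin m → ZMod 2),
        proj S (Fin.cons x0 xs)
          = ((2 : ℂ)⁻¹ • ((1 : Matrix d d ℂ) + ((-1 : ℂ) ^ (x0).val) • S 0))
            * proj (fun i => S i.succ) xs := by
      intro x0 xs
      rw [proj, List.ofFn_succ, List.prod_cons]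
      simp [proj]
    have hSpow : Spow S a = S 0 ^ (a 0).val * Spow (fun i => S i.succ) (fun i => a i.succ) := by
      rw [Spow, List.ofFn_succ, List.prod_cons]; rfl
    calc ∑ x0 : ZMod 2, ∑ xs : Fin m → ZMod 2,
          ((-1:ℂ) ^ (dotp a (Fin.cons x0 xs)).val) • proj S (Fin.cons x0 xs)
        = (∑ x0 : ZMod 2, ((-1:ℂ) ^ (a 0 * x0).val)
              • ((2 : ℂ)⁻¹ • ((1 : Matrix d d ℂ) + ((-1 : ℂ) ^ (x0).val) • S 0)))
          * (∑ xs : Fin m → ZMod 2,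
              ((-1:ℂ) ^ (dotp (fun i => a i.succ) xs).val) • proj (fun i => S i.succ) xs) := by
          rw [Finset.sum_mul_sum]
          refine Finset.sum_congr rfl fun x0 _ => Finset.sum_congr rfl fun xs _ => ?_
          rw [hdot, hproj, sign_add, smul_mul_smul_comm]
      _ = S 0 ^ (a 0).val * Spow (fun i => S i.succ) (fun i => a i.succ) := by
          rw [base, key (fun i => S i.succ) (fun i => a i.succ)]
      _ = Spow S a := hSpow.symm

/-- For a faulty measurement with internal distribution `P` and outcome probabilities
`p̃(x|ρ) = Σ_{e,u} P(e,u) tr(π_{x+u} ρ)`, the noisy expectation value of `S(a)` satisfies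
`Ẽ(a|ρ) = E(χ_a; P) · E(a|ρ)`. -/
theorem noisy_expectation_factorizes {d ι : Type*} [Fintype d] [DecidableEq d]
    [Fintype ι] {m : ℕ}
    (S : Fin m → Matrix d d ℂ)
    (hcomm : ∀ i j, S i * S j = S j * S i)
    (hinv : ∀ i, S i * S i = 1)
    (P : ι × (Fin m → ZMod 2) → ℝ) (hPnn : ∀ p, 0 ≤ P p) (hPsum : ∑ p, P p = 1)
    (ρ : Matrix d d ℂ) (a : Fin m → ZMod 2) :
    ∑ x : Fin m → ZMod 2, ((-1 : ℂ) ^ (dotp a x).val) *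
        (∑ p : ι × (Fin m → ZMod 2), (P p : ℂ) * (proj S (x + p.2) * ρ).trace)
      = (∑ p : ι × (Fin m → ZMod 2), ((-1 : ℂ) ^ (dotp a p.2).val) * (P p : ℂ)) *
          (Spow S a * ρ).trace := by
  have inner : ∑ y : Fin m → ZMod 2, ((-1:ℂ) ^ (dotp a y).val) * (proj S y * ρ).trace
      = (Spow S a * ρ).trace := by
    rw [← key S a, Finset.sum_mul, trace_sum]
    exact Finset.sum_congr rfl fun y _ => by rw [smul_mul_assoc, trace_smul, smul_eq_mul]
  have hdot_add : ∀ x u : Fin m → ZMod 2, dotp a (x + u) = dotp a x + dotp a u := by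
    intro x u
    simp [dotp, mul_add, Finset.sum_add_distrib]
  have hself : ∀ u : Fin m → ZMod 2, u + u = 0 := by
    intro u; funext i; exact CharTwo.add_self_eq_zero (u i)
  simp_rw [Finset.mul_sum]
  rw [Finset.sum_comm, Finset.sum_mul]
  refine Finset.sum_congr rfl fun p _ => ?_
  have hre : ∑ x : Fin m → ZMod 2,
      ((-1 : ℂ) ^ (dotp a x).val) * ((P p : ℂ) * (proj S (x + p.2) * ρ).trace)
      = ∑ y : Fin m → ZMod 2,
      ((-1 : ℂ) ^ (dotp a (y + p.2)).val) * ((P p : ℂ) * (proj S y * ρ).trace) := by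
    rw [← Equiv.sum_comp (Equiv.addRight p.2)
      (fun x => ((-1 : ℂ) ^ (dotp a x).val) * ((P p : ℂ) * (proj S (x + p.2) * ρ).trace))]
    refine Finset.sum_congr rfl fun y _ => ?_
    simp [add_assoc, hself]
  rw [hre]
  simp_rw [hdot_add, sign_add]
  rw [← inner, Finset.mul_sum]
  refine Finset.sum_congr rfl fun y _ => by ring
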